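/- Let S > 0, N_1, …, N_K > 0, and 1 ≤ q ≤ K − 1. Define g : (0,∞) → ℝ by g(t) = t²·ln t − (t² − 1) + ((t·∑_{k=1}^q N_k + N_{q+1})/(S + ∑_{k=1}^K N_k))·(t − 1). Then g has a unique zero t_q in the open interval (1, ∞); moreover g(t) < 0 for 1 < t < t_q and g(t) > 0 for t > t_q. -/

import Mathlib

open Real Set

lemma iccp_key (a b D : ℝ) (ha : 0 < a) (hb : 0 < b) (hD : 0 < D) (hab : a + b < D) :
    ∃ tq : ℝ, 1 < tq ∧
      (tq ^ 2 * Real.log tq - (tq ^ 2 - 1) + ((tq * a + b) / D) * (tq - 1) = 0) ∧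
      (∀ t : ℝ, 1 < t →
        (t ^ 2 * Real.log t - (t ^ 2 - 1) + ((t * a + b) / D) * (t - 1) = 0) → t = tq) ∧
      (∀ t : ℝ, 1 < t → t < tq →
        t ^ 2 * Real.log t - (t ^ 2 - 1) + ((t * a + b) / D) * (t - 1) < 0) ∧
      (∀ t : ℝ, tq < t →
        0 < t ^ 2 * Real.log t - (t ^ 2 - 1) + ((t * a + b) / D) * (t - 1)) := by
  set g : ℝ → ℝ := fun t => t ^ 2 * Real.log t - (t ^ 2 - 1) + ((t * a + b) / D) * (t - 1) with hg
  set g' : ℝ → ℝ := fun t => 2 * t * Real.log t + t - 2 * t + (a * (t - 1) + (t * a + b)) / D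
    with hg'
  have hDne : D ≠ 0 := hD.ne'
  -- derivative of g
  have hderiv : ∀ t : ℝ, 0 < t → HasDerivAt g (g' t) t := by
    intro t ht
    have h1 : HasDerivAt (fun x : ℝ => x ^ 2 * Real.log x) (2 * t * Real.log t + t) t := by
      have := (hasDerivAt_pow 2 t).fun_mul (Real.hasDerivAt_log ht.ne')
      refine this.congr_deriv ?_
      field_simp
      ring
    have h2 : HasDerivAt (fun x : ℝ => ((x * a + b) / D) * (x - 1))
        ((a * (t - 1) + (t * a + b)) / D) t := by
      have := ((((hasDerivAt_id t).mul_const a).add_const b).div_const D).fun_mul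
        ((hasDerivAt_id t).sub_const 1)
      refine this.congr_deriv ?_
      field_simp
      simp only [id_eq]
    have := (h1.fun_sub ((hasDerivAt_pow 2 t).sub_const 1)).fun_add h2
    refine this.congr_deriv ?_
    simp [hg']
  -- derivative of g'
  have hderiv2 : ∀ t : ℝ, 0 < t → HasDerivAt g' (2 * Real.log t + 1 + 2 * a / D) t := by
    intro t ht
    have h1 : HasDerivAt (fun x : ℝ => 2 * x * Real.log x) (2 * Real.log t + 2) t := by
      have := (((hasDerivAt_id t).const_mul 2)).fun_mul (Real.hasDerivAt_log ht.ne')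
      refine this.congr_deriv ?_
      field_simp
      simp only [id_eq]
      ring
    have h2 : HasDerivAt (fun x : ℝ => (a * (x - 1) + (x * a + b)) / D) (2 * a / D) t := by
      have := (((((hasDerivAt_id t).sub_const 1).const_mul a).fun_add
        (((hasDerivAt_id t).mul_const a).add_const b))).div_const D
      refine this.congr_deriv ?_
      ring
    have := ((h1.fun_add (hasDerivAt_id t)).fun_sub ((hasDerivAt_id t).const_mul 2)).fun_add h2
    refine this.congr_deriv ?_
    ring
  -- g' is strictly monotone on [1, ∞)
  have hmono' : StrictMonoOn g' (Set.Ici 1) := by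
    apply strictMonoOn_of_deriv_pos (convex_Ici 1)
    · intro t ht
      exact (hderiv2 t (lt_of_lt_of_le one_pos ht)).continuousAt.continuousWithinAt
    · intro t ht
      rw [interior_Ici] at ht
      have ht0 : (0:ℝ) < t := lt_trans one_pos ht
      rw [(hderiv2 t ht0).deriv]
      have hlog : 0 < Real.log t := Real.log_pos ht
      have : 0 < 2 * a / D := by positivity
      linarith
  -- g' 1 < 0
  have hg'1 : g' 1 < 0 := by
    have h1 : (a + b) / D < 1 := (div_lt_one hD).2 hab
    simp only [hg', Real.log_one]
    have : (a * (1 - 1) + (1 * a + b)) / D = (a + b) / D := by ring_nf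
    rw [this]
    linarith
  -- e > 1
  have he1 : (1:ℝ) < Real.exp 1 := by
    have := Real.add_one_le_exp (1:ℝ)
    linarith
  have he0 : (0:ℝ) < Real.exp 1 := lt_trans one_pos he1
  -- g' e > 0
  have hg'e : 0 < g' (Real.exp 1) := by
    simp only [hg', Real.log_exp]
    have h1 : 0 < (a * (Real.exp 1 - 1) + (Real.exp 1 * a + b)) / D := by
      apply div_pos _ hD
      nlinarith
    nlinarith
  -- find s ∈ (1, e) with g' s = 0
  have hcont' : ContinuousOn g' (Set.Icc 1 (Real.exp 1)) := by
    intro t ht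
    exact (hderiv2 t (lt_of_lt_of_le one_pos ht.1)).continuousAt.continuousWithinAt
  obtain ⟨s, hs, hgs⟩ := intermediate_value_Ioo he1.le hcont' (Set.mem_Ioo.2 ⟨hg'1, hg'e⟩)
  have hs1 : 1 < s := hs.1
  have hs0 : (0:ℝ) < s := lt_trans one_pos hs1
  -- sign of g' around s
  have hg'neg : ∀ t : ℝ, 1 ≤ t → t < s → g' t < 0 := by
    intro t ht1 hts
    have := hmono' (Set.mem_Ici.2 ht1) (Set.mem_Ici.2 hs1.le) hts
    rw [hgs] at this; exact this
  have hg'pos : ∀ t : ℝ, s < t → 0 < g' t := by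
    intro t hst
    have := hmono' (Set.mem_Ici.2 hs1.le) (Set.mem_Ici.2 (hs1.le.trans hst.le)) hst
    rw [hgs] at this; exact this
  -- continuity of g
  have hcontg : ∀ t : ℝ, 0 < t → ContinuousAt g t := fun t ht => (hderiv t ht).continuousAt
  -- g strictly decreasing on [1, s]
  have hanti : StrictAntiOn g (Set.Icc 1 s) := by
    apply strictAntiOn_of_deriv_neg (convex_Icc 1 s)
    · intro t ht
      exact (hcontg t (lt_of_lt_of_le one_pos ht.1)).continuousWithinAt
    · intro t ht
      rw [interior_Icc] at ht
      rw [(hderiv t (lt_trans one_pos ht.1)).deriv]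
      exact hg'neg t ht.1.le ht.2
  -- g strictly increasing on [s, ∞)
  have hmonog : StrictMonoOn g (Set.Ici s) := by
    apply strictMonoOn_of_deriv_pos (convex_Ici s)
    · intro t ht
      exact (hcontg t (lt_of_lt_of_le hs0 ht)).continuousWithinAt
    · intro t ht
      rw [interior_Ici] at ht
      rw [(hderiv t (lt_trans hs0 ht)).deriv]
      exact hg'pos t ht
  -- g 1 = 0
  have hg1 : g 1 = 0 := by simp [hg]
  -- g s < 0
  have hgsneg : g s < 0 := by
    have := hanti (Set.mem_Icc.2 ⟨le_refl 1, hs1.le⟩) (Set.mem_Icc.2 ⟨hs1.le, le_refl s⟩) hs1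
    rw [hg1] at this; exact this
  -- g e > 0
  have hgepos : 0 < g (Real.exp 1) := by
    simp only [hg, Real.log_exp]
    have h1 : 0 < ((Real.exp 1 * a + b) / D) * (Real.exp 1 - 1) := by
      apply mul_pos (div_pos (by nlinarith) hD)
      linarith
    nlinarith
  -- IVT for g on [s, e]
  have hse : s < Real.exp 1 := hs.2
  have hcontg2 : ContinuousOn g (Set.Icc s (Real.exp 1)) := by
    intro t ht
    exact (hcontg t (lt_of_lt_of_le hs0 ht.1)).continuousWithinAt
  obtain ⟨tq, htq, hgtq⟩ := intermediate_value_Ioo hse.le hcontg2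
    (Set.mem_Ioo.2 ⟨hgsneg, hgepos⟩)
  have htq1 : 1 < tq := lt_trans hs1 htq.1
  -- negative part
  have hneg : ∀ t : ℝ, 1 < t → t < tq → g t < 0 := by
    intro t ht1 httq
    rcases le_or_gt t s with h | h
    · have := hanti (Set.mem_Icc.2 ⟨le_refl 1, hs1.le⟩) (Set.mem_Icc.2 ⟨ht1.le, h⟩) ht1
      rw [hg1] at this; exact this
    · have := hmonog (Set.mem_Ici.2 h.le) (Set.mem_Ici.2 htq.1.le) httq
      rw [hgtq] at this; exact this
  -- positive part
  have hpos : ∀ t : ℝ, tq < t → 0 < g t := by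
    intro t htqt
    have := hmonog (Set.mem_Ici.2 htq.1.le) (Set.mem_Ici.2 (htq.1.le.trans htqt.le)) htqt
    rw [hgtq] at this; exact this
  refine ⟨tq, htq1, hgtq, ?_, hneg, hpos⟩
  intro t ht1 hgt
  rcases lt_trichotomy t tq with h | h | h
  · exact absurd hgt (ne_of_lt (hneg t ht1 h))
  · exact h
  · exact absurd hgt (ne_of_gt (hpos t h))

/-- The function g(t) = t² ln t − (t² − 1) + ((t ∑_{k=1}^q N_k + N_{q+1})/(S + ∑_{k=1}^K N_k))(t − 1)
has a unique zero t_q in (1, ∞); moreover g < 0 on (1, t_q) and g > 0 on (t_q, ∞).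
Group sizes are indexed 0, …, K−1, so ∑_{k=1}^q N_k = ∑_{k<q} N k and N_{q+1} = N q. -/
theorem iccp_threshold_exists_unique (S : ℝ) (hS : 0 < S)
    (K : ℕ) (N : ℕ → ℝ) (hN : ∀ k < K, 0 < N k)
    (q : ℕ) (hq1 : 1 ≤ q) (hqK : q ≤ K - 1) :
    ∃ tq : ℝ, 1 < tq ∧
      (tq ^ 2 * Real.log tq - (tq ^ 2 - 1) +
        ((tq * ∑ k ∈ Finset.range q, N k + N q) /
          (S + ∑ k ∈ Finset.range K, N k)) * (tq - 1) = 0) ∧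
      (∀ t : ℝ, 1 < t →
        (t ^ 2 * Real.log t - (t ^ 2 - 1) +
          ((t * ∑ k ∈ Finset.range q, N k + N q) /
            (S + ∑ k ∈ Finset.range K, N k)) * (t - 1) = 0) → t = tq) ∧
      (∀ t : ℝ, 1 < t → t < tq →
        t ^ 2 * Real.log t - (t ^ 2 - 1) +
          ((t * ∑ k ∈ Finset.range q, N k + N q) /
            (S + ∑ k ∈ Finset.range K, N k)) * (t - 1) < 0) ∧
      (∀ t : ℝ, tq < t →
        0 < t ^ 2 * Real.log t - (t ^ 2 - 1) +
          ((t * ∑ k ∈ Finset.range q, N k + N q) /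
            (S + ∑ k ∈ Finset.range K, N k)) * (t - 1)) := by
  have hqK' : q < K := by omega
  have ha : 0 < ∑ k ∈ Finset.range q, N k := by
    apply Finset.sum_pos
    · intro k hk
      exact hN k (lt_trans (Finset.mem_range.1 hk) hqK')
    · exact Finset.nonempty_range_iff.2 (by omega)
  have hb : 0 < N q := hN q hqK'
  have hD : 0 < S + ∑ k ∈ Finset.range K, N k := by
    have : 0 ≤ ∑ k ∈ Finset.range K, N k :=
      Finset.sum_nonneg fun k hk => (hN k (Finset.mem_range.1 hk)).le
    linarith
  have hab : (∑ k ∈ Finset.range q, N k) + N q < S + ∑ k ∈ Finset.range K, N k := by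
    have h1 : ∑ k ∈ Finset.range (q + 1), N k ≤ ∑ k ∈ Finset.range K, N k :=
      Finset.sum_le_sum_of_subset_of_nonneg (Finset.range_subset_range.2 (by omega))
        (fun k hk _ => (hN k (Finset.mem_range.1 hk)).le)
    rw [Finset.sum_range_succ] at h1
    linarith
  exact iccp_key _ _ _ ha hb hD hab
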